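/- Let F be a field and A a unital locally matrix algebra over F. Then the inner automorphisms are dense in the semigroup of unital injective endomorphisms of A in the Tykhonoff (pointwise-convergence) topology; concretely: for every injective unital F-algebra endomorphism φ of A and every finite list of elements a_1, …, a_n ∈ A there exists an invertible element u ∈ A such that φ(a_i) = u⁻¹·a_i·u for all i = 1, …, n. -/

import Mathlib

open Module LinearMap

section RankLemmas

variable {F V : Type*} [Field F] [AddCommGroup V] [Module F V] [FiniteDimensional F V]

lemma aux_rank_le (a b r s : Module.End F V) (hab : a * b = r) (hba : b * a = s)
    (hr : r * r = r) :
    finrank F (LinearMap.range r) ≤ finrank F (LinearMap.range s) := by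
  have h3 : r = a * (s * b) := by
    calc r = r * r := hr.symm
      _ = a * (s * b) := by rw [← hab, ← hba]; noncomm_ring
  calc finrank F (LinearMap.range r)
      = finrank F (Submodule.map a (LinearMap.range (s * b))) := by
        rw [h3, Module.End.mul_eq_comp, LinearMap.range_comp]
    _ ≤ finrank F (LinearMap.range (s * b)) := Submodule.finrank_map_le _ _
    _ ≤ finrank F (LinearMap.range s) := by
        apply Submodule.finrank_mono
        rw [Module.End.mul_eq_comp]
        exact LinearMap.range_comp_le_range _ _

/-- Equivalent idempotents have ranges of equal rank. -/
lemma aux_rank_eq_of_equiv (p q x y : Module.End F V) (hxy : x * y = p) (hyx : y * x = q)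
    (hp : p * p = p) (hq : q * q = q) :
    finrank F (LinearMap.range p) = finrank F (LinearMap.range q) :=
  le_antisymm (aux_rank_le x y p q hxy hyx hp) (aux_rank_le y x q p hyx hxy hq)

lemma aux_rank_add (p q : Module.End F V) (hp : p * p = p) (hq : q * q = q)
    (hpq : p * q = 0) (hqp : q * p = 0) :
    finrank F (LinearMap.range (p + q))
      = finrank F (LinearMap.range p) + finrank F (LinearMap.range q) := by
  have hrange : LinearMap.range (p + q) = LinearMap.range p ⊔ LinearMap.range q := by
    apply le_antisymm
    · rintro v ⟨w, rfl⟩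
      exact Submodule.add_mem_sup (LinearMap.mem_range_self p w) (LinearMap.mem_range_self q w)
    · apply sup_le
      · rintro v ⟨w, rfl⟩
        refine ⟨p w, ?_⟩
        have h1 : p (p w) = p w := by rw [← Module.End.mul_apply, hp]
        have h2 : q (p w) = 0 := by rw [← Module.End.mul_apply, hqp]; rfl
        simp [h1, h2]
      · rintro v ⟨w, rfl⟩
        refine ⟨q w, ?_⟩
        have h1 : q (q w) = q w := by rw [← Module.End.mul_apply, hq]
        have h2 : p (q w) = 0 := by rw [← Module.End.mul_apply, hpq]; rfl
        simp [h1, h2]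
  have hinf : LinearMap.range p ⊓ LinearMap.range q = ⊥ := by
    rw [eq_bot_iff]
    rintro v ⟨⟨a, ha⟩, ⟨b, hb⟩⟩
    have h1 : p v = v := by rw [← ha, ← Module.End.mul_apply, hp]
    have h2 : p v = 0 := by rw [← hb, ← Module.End.mul_apply, hpq]; rfl
    simp only [Submodule.mem_bot]
    rw [← h1, h2]
  have := Submodule.finrank_sup_add_finrank_inf_eq (LinearMap.range p) (LinearMap.range q)
  rw [hinf, finrank_bot, add_zero] at this
  rw [hrange, this]

omit [FiniteDimensional F V] in
lemma aux_sum_idem {ι : Type*} [DecidableEq ι] (s : Finset ι) (p : ι → Module.End F V)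
    (hidem : ∀ i, p i * p i = p i) (horth : ∀ i j, i ≠ j → p i * p j = 0) :
    (∑ i ∈ s, p i) * (∑ i ∈ s, p i) = ∑ i ∈ s, p i := by
  rw [Finset.sum_mul_sum]
  apply Finset.sum_congr rfl
  intro i hi
  rw [Finset.sum_eq_single i (fun j _ hji => horth i j (Ne.symm hji)) (fun h => absurd hi h)]
  exact hidem i

lemma aux_rank_sum {ι : Type*} [DecidableEq ι] (s : Finset ι) (p : ι → Module.End F V)
    (hidem : ∀ i, p i * p i = p i) (horth : ∀ i j, i ≠ j → p i * p j = 0) :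
    finrank F (LinearMap.range (∑ i ∈ s, p i))
      = ∑ i ∈ s, finrank F (LinearMap.range (p i)) := by
  induction s using Finset.induction_on with
  | empty => rw [Finset.sum_empty, LinearMap.range_eq_bot.mpr rfl]; simp
  | @insert a s ha ih =>
    rw [Finset.sum_insert ha, Finset.sum_insert ha, ← ih,
      aux_rank_add (p a) (∑ i ∈ s, p i) (hidem a) (aux_sum_idem s p hidem horth) ?_ ?_]
    · rw [Finset.mul_sum]
      exact Finset.sum_eq_zero fun i hi => horth a i (fun h => ha (h ▸ hi))
    · rw [Finset.sum_mul]
      exact Finset.sum_eq_zero fun i hi => horth i a (fun h => ha (h ▸ hi))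


omit [FiniteDimensional F V] in
lemma aux_idem_fix (p : Module.End F V) (hp : p * p = p) {w : V}
    (hw : w ∈ LinearMap.range p) : p w = w := by
  obtain ⟨a, rfl⟩ := hw
  rw [← Module.End.mul_apply, hp]

/-- Idempotents with equal rank are equivalent (with normalized witnesses). -/
lemma aux_equiv_of_rank_eq (p q : Module.End F V) (hp : p * p = p) (hq : q * q = q)
    (h : finrank F (LinearMap.range p) = finrank F (LinearMap.range q)) :
    ∃ x y : Module.End F V, x * y = p ∧ y * x = q ∧ x * q = x ∧ y * p = y := by
  let θ : (LinearMap.range q) ≃ₗ[F] (LinearMap.range p) :=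
    LinearEquiv.ofFinrankEq _ _ h.symm
  let qr : V →ₗ[F] (LinearMap.range q) :=
    LinearMap.codRestrict _ q (fun c => LinearMap.mem_range_self q c)
  let pr : V →ₗ[F] (LinearMap.range p) :=
    LinearMap.codRestrict _ p (fun c => LinearMap.mem_range_self p c)
  let x : Module.End F V := (LinearMap.range p).subtype ∘ₗ θ.toLinearMap ∘ₗ qr
  let y : Module.End F V := (LinearMap.range q).subtype ∘ₗ θ.symm.toLinearMap ∘ₗ pr
  have hqr : ∀ w : LinearMap.range q, qr ↑w = w := by
    intro w
    ext
    simp only [qr, LinearMap.codRestrict_apply]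
    exact aux_idem_fix q hq w.2
  have hpr : ∀ w : LinearMap.range p, pr ↑w = w := by
    intro w
    ext
    simp only [pr, LinearMap.codRestrict_apply]
    exact aux_idem_fix p hp w.2
  refine ⟨x, y, ?_, ?_, ?_, ?_⟩
  · ext v
    simp only [Module.End.mul_apply, x, y, LinearMap.comp_apply, Submodule.coe_subtype, LinearEquiv.coe_coe]
    rw [hqr (θ.symm (pr v)), θ.apply_symm_apply]
    simp [pr]
  · ext v
    simp only [Module.End.mul_apply, x, y, LinearMap.comp_apply, Submodule.coe_subtype, LinearEquiv.coe_coe]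
    rw [hpr (θ (qr v)), θ.symm_apply_apply]
    simp [qr]
  · ext v
    simp only [Module.End.mul_apply, x, LinearMap.comp_apply, Submodule.coe_subtype, LinearEquiv.coe_coe]
    congr 2
    ext
    simp only [qr, LinearMap.codRestrict_apply]
    rw [← Module.End.mul_apply, hq]
  · ext v
    simp only [Module.End.mul_apply, y, LinearMap.comp_apply, Submodule.coe_subtype, LinearEquiv.coe_coe]
    congr 2
    ext
    simp only [pr, LinearMap.codRestrict_apply]
    rw [← Module.End.mul_apply, hp]

/-- A system of n×n matrix units in End V summing to 1 forces n * rank(E z z) = dim V. -/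
lemma aux_rank_count {n : ℕ} (z : Fin n) (E : Fin n → Fin n → Module.End F V)
    (hmul : ∀ i j k l, E i j * E k l = if j = k then E i l else 0)
    (hsum : ∑ i, E i i = 1) :
    finrank F V = n * finrank F (LinearMap.range (E z z)) := by
  have hidem : ∀ i, E i i * E i i = E i i := fun i => by rw [hmul]; simp
  have horth : ∀ i j, i ≠ j → E i i * E j j = 0 := fun i j hij => by
    rw [hmul, if_neg hij]
  have hrk : ∀ i, finrank F (LinearMap.range (E i i))
      = finrank F (LinearMap.range (E z z)) := by
    intro i
    refine aux_rank_eq_of_equiv (E i i) (E z z) (E i z) (E z i) ?_ ?_ (hidem i) (hidem z)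
    · rw [hmul]; simp
    · rw [hmul]; simp
  calc finrank F V = finrank F (LinearMap.range (1 : Module.End F V)) := by
        rw [Module.End.one_eq_id, LinearMap.range_id, finrank_top]
    _ = finrank F (LinearMap.range (∑ i, E i i)) := by rw [hsum]
    _ = ∑ i : Fin n, finrank F (LinearMap.range (E i i)) :=
        aux_rank_sum Finset.univ (fun i => E i i) hidem horth
    _ = n * finrank F (LinearMap.range (E z z)) := by
        simp [hrk, Finset.sum_const]

end RankLemmas


/-- A (not necessarily unital) associative algebra `A` over a field `F` is a *locally matrix
algebra* if every finite subset of `A` is contained in a subalgebra of `A` that is isomorphic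
to a matrix algebra `Mₙ(F)` for some `n ≥ 1`. -/
def IsLocallyMatrix (F A : Type*) [Field F] [NonUnitalRing A] [Module F A]
    [SMulCommClass F A A] [IsScalarTower F A A] : Prop :=
  ∀ s : Finset A, ∃ (B : NonUnitalSubalgebra F A) (n : ℕ), 0 < n ∧ (s : Set A) ⊆ (B : Set A) ∧
    ∃ f : B →ₙₐ[F] Matrix (Fin n) (Fin n) F, Function.Bijective f

/-- **Inner automorphisms are dense in the unital injective endomorphisms** (Theorem 1(2)):
if `A` is a unital locally matrix algebra over a field `F`, then for every injective unital
`F`-algebra endomorphism `φ` of `A` and every finite list of elements of `A` there is an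
invertible element `u ∈ A` such that `φ(a) = u⁻¹ * a * u` on these elements. -/
theorem innerAutomorphisms_dense (F A : Type*) [Field F] [Ring A] [Algebra F A]
    (hA : IsLocallyMatrix F A)
    (φ : A →ₐ[F] A) (hφ : Function.Injective φ) (s : Finset A) :
    ∃ u : Aˣ, ∀ a ∈ s, φ a = ↑u⁻¹ * a * ↑u := by
  classical
  obtain ⟨B, n, hn, hsB, f, hf⟩ := hA (insert 1 s)
  have h1B : (1 : A) ∈ B := hsB (by simp)
  set z : Fin n := ⟨0, hn⟩ with hz
  -- the inverse of f
  set finv : Matrix (Fin n) (Fin n) F → B := ⇑(Equiv.ofBijective f hf).symm with hfinvdef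
  have hfinv : ∀ x, f (finv x) = x := fun x => (Equiv.ofBijective f hf).apply_symm_apply x
  have hone : f ⟨1, h1B⟩ = 1 := by
    have h : ∀ y, f ⟨1, h1B⟩ * y = y := by
      intro y
      obtain ⟨b, rfl⟩ := hf.2 y
      rw [← map_mul]
      congr 1
      exact Subtype.ext (one_mul _)
    have h2 := h 1
    rwa [mul_one] at h2
  -- matrix units in B
  set e : Fin n → Fin n → A := fun i j => ↑(finv (Matrix.single i j 1)) with he
  have hmulE : ∀ i j k l, e i j * e k l = if j = k then e i l else 0 := by
    intro i j k l
    have hmm : finv (Matrix.single i j 1) * finv (Matrix.single k l 1)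
        = finv (Matrix.single i j 1 * Matrix.single k l 1) := by
      apply hf.1
      rw [map_mul, hfinv, hfinv, hfinv]
    have : e i j * e k l
        = ↑(finv (Matrix.single i j 1 * Matrix.single k l 1)) := by
      rw [he, ← MulMemClass.coe_mul, hmm]
    rw [this]
    by_cases h : j = k
    · subst h
      rw [if_pos rfl, Matrix.single_mul_single_same, one_mul, he]
    · rw [if_neg h, Matrix.single_mul_single_of_ne (h := h)]
      have h0 : finv 0 = 0 := hf.1 (by rw [hfinv, map_zero])
      rw [h0, ZeroMemClass.coe_zero]
  have hsumE : ∑ i, e i i = 1 := by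
    have h1 : (∑ i, finv (Matrix.single i i 1)) = ⟨1, h1B⟩ := by
      apply hf.1
      rw [map_sum, hone]
      simp only [hfinv]
      ext a b
      simp only [Matrix.sum_apply, Matrix.single, Matrix.of_apply, Matrix.one_apply]
      by_cases hab : a = b
      · simp [hab]
      · have hno : ∀ x : Fin n, ¬(x = a ∧ x = b) := fun x ⟨hx1, hx2⟩ => hab (hx1 ▸ hx2)
        simp only [Matrix.zero_apply, if_neg hab]
        exact Finset.sum_eq_zero (fun x _ => if_neg (hno x))
    calc ∑ i, e i i = ↑(∑ i, finv (Matrix.single i i 1)) :=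
          (AddSubmonoidClass.coe_finset_sum _ _).symm
      _ = 1 := by rw [h1]
  have hdecomp : ∀ a, ∀ h : a ∈ B, a = ∑ i, ∑ j, (f ⟨a, h⟩ i j) • e i j := by
    intro a h
    have h1 : (⟨a, h⟩ : B) = ∑ i, ∑ j, (f ⟨a, h⟩ i j) • finv (Matrix.single i j 1) := by
      apply hf.1
      simp only [map_sum, map_smul, hfinv, Matrix.smul_single, smul_eq_mul, mul_one]
      exact Matrix.matrix_eq_sum_single _
    have h2 := congrArg (Subtype.val) h1
    simp only [AddSubmonoidClass.coe_finset_sum, SetLike.val_smul] at h2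
    exact h2
  have hmulF : ∀ i j k l, φ (e i j) * φ (e k l) = if j = k then φ (e i l) else 0 := by
    intro i j k l
    rw [← map_mul, hmulE]
    split <;> simp
  -- Step 2 : the bigger matrix algebra C
  obtain ⟨C, m, hm, hsC, g, hg⟩ := hA (insert 1
    (((Finset.univ : Finset (Fin n × Fin n)).image fun p => e p.1 p.2) ∪
     ((Finset.univ : Finset (Fin n × Fin n)).image fun p => φ (e p.1 p.2))))
  have h1C : (1 : A) ∈ C := hsC (by simp)
  have heC : ∀ i j, e i j ∈ C := fun i j =>
    hsC (Finset.mem_coe.mpr (Finset.mem_insert_of_mem (Finset.mem_union_left _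
      (Finset.mem_image.mpr ⟨(i, j), Finset.mem_univ _, rfl⟩))))
  have hfC : ∀ i j, φ (e i j) ∈ C := fun i j =>
    hsC (Finset.mem_coe.mpr (Finset.mem_insert_of_mem (Finset.mem_union_right _
      (Finset.mem_image.mpr ⟨(i, j), Finset.mem_univ _, rfl⟩))))
  set ginv : Matrix (Fin m) (Fin m) F → C := ⇑(Equiv.ofBijective g hg).symm with hginvdef
  have hginv : ∀ x, g (ginv x) = x := fun x => (Equiv.ofBijective g hg).apply_symm_apply x
  have hgone : g ⟨1, h1C⟩ = 1 := by
    have h : ∀ y, g ⟨1, h1C⟩ * y = y := by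
      intro y
      obtain ⟨b, rfl⟩ := hg.2 y
      rw [← map_mul]
      congr 1
      exact Subtype.ext (one_mul _)
    have h2 := h 1
    rwa [mul_one] at h2
  set T : Matrix (Fin m) (Fin m) F ≃ₐ[F] Module.End F (Fin m → F) :=
    Matrix.toLinAlgEquiv' with hT
  set Ebar : Fin n → Fin n → Module.End F (Fin m → F) :=
    fun i j => T (g ⟨e i j, heC i j⟩) with hEbar
  set Fbar : Fin n → Fin n → Module.End F (Fin m → F) :=
    fun i j => T (g ⟨φ (e i j), hfC i j⟩) with hFbar
  have hmulEbar : ∀ i j k l, Ebar i j * Ebar k l = if j = k then Ebar i l else 0 := by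
    intro i j k l
    rw [hEbar]
    simp only
    rw [← map_mul, ← map_mul]
    by_cases h : j = k
    · rw [if_pos h]
      have h0 : (⟨e i j, heC i j⟩ : C) * ⟨e k l, heC k l⟩ = ⟨e i l, heC i l⟩ :=
        Subtype.ext (by rw [MulMemClass.coe_mul, hmulE, if_pos h])
      rw [h0]
    · rw [if_neg h]
      have h0 : (⟨e i j, heC i j⟩ : C) * ⟨e k l, heC k l⟩ = 0 :=
        Subtype.ext (by rw [MulMemClass.coe_mul, hmulE, if_neg h]; rfl)
      rw [h0, map_zero, map_zero]
  have hmulFbar : ∀ i j k l, Fbar i j * Fbar k l = if j = k then Fbar i l else 0 := by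
    intro i j k l
    rw [hFbar]
    simp only
    rw [← map_mul, ← map_mul]
    by_cases h : j = k
    · rw [if_pos h]
      have h0 : (⟨φ (e i j), hfC i j⟩ : C) * ⟨φ (e k l), hfC k l⟩ = ⟨φ (e i l), hfC i l⟩ :=
        Subtype.ext (by rw [MulMemClass.coe_mul, hmulF, if_pos h])
      rw [h0]
    · rw [if_neg h]
      have h0 : (⟨φ (e i j), hfC i j⟩ : C) * ⟨φ (e k l), hfC k l⟩ = 0 :=
        Subtype.ext (by rw [MulMemClass.coe_mul, hmulF, if_neg h]; rfl)
      rw [h0, map_zero, map_zero]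
  have hsumEbar : ∑ i, Ebar i i = 1 := by
    have h1 : (∑ i, (⟨e i i, heC i i⟩ : C)) = ⟨1, h1C⟩ :=
      Subtype.ext (by rw [AddSubmonoidClass.coe_finset_sum]; exact hsumE)
    calc ∑ i, Ebar i i = T (g (∑ i, (⟨e i i, heC i i⟩ : C))) := by
          rw [map_sum, map_sum]
      _ = 1 := by rw [h1, hgone, map_one]
  have hsumFbar : ∑ i, Fbar i i = 1 := by
    have hsF : ∑ i, φ (e i i) = 1 := by rw [← map_sum, hsumE, map_one]
    have h1 : (∑ i, (⟨φ (e i i), hfC i i⟩ : C)) = ⟨1, h1C⟩ :=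
      Subtype.ext (by rw [AddSubmonoidClass.coe_finset_sum]; exact hsF)
    calc ∑ i, Fbar i i = T (g (∑ i, (⟨φ (e i i), hfC i i⟩ : C))) := by
          rw [map_sum, map_sum]
      _ = 1 := by rw [h1, hgone, map_one]
  -- rank equality and equivalence of idempotents
  have hp : Ebar z z * Ebar z z = Ebar z z := by rw [hmulEbar, if_pos rfl]
  have hq : Fbar z z * Fbar z z = Fbar z z := by rw [hmulFbar, if_pos rfl]
  have hfr : Module.finrank F (LinearMap.range (Ebar z z))
      = Module.finrank F (LinearMap.range (Fbar z z)) := by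
    have h1 := aux_rank_count z Ebar hmulEbar hsumEbar
    have h2 := aux_rank_count z Fbar hmulFbar hsumFbar
    exact Nat.eq_of_mul_eq_mul_left hn (h1.symm.trans h2)
  obtain ⟨xb, yb, hxy, hyx, hxq, hyp⟩ :=
    aux_equiv_of_rank_eq (Ebar z z) (Fbar z z) hp hq hfr
  -- pull back to A
  set xC : C := ginv (T.symm xb) with hxC
  set yC : C := ginv (T.symm yb) with hyC
  set x : A := ↑xC with hx
  set y : A := ↑yC with hy
  have hTgx : T (g xC) = xb := by rw [hxC, hginv, AlgEquiv.apply_symm_apply]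
  have hTgy : T (g yC) = yb := by rw [hyC, hginv, AlgEquiv.apply_symm_apply]
  have pull : ∀ c d w : C, T (g c) * T (g d) = T (g w) → (↑c : A) * ↑d = ↑w := by
    intro c d w h
    rw [← map_mul, ← map_mul] at h
    have := hg.1 (T.injective h)
    rw [← MulMemClass.coe_mul, this]
  have hxyA : x * y = e z z :=
    pull xC yC ⟨e z z, heC z z⟩ (by rw [hTgx, hTgy, hxy])
  have hyxA : y * x = φ (e z z) :=
    pull yC xC ⟨φ (e z z), hfC z z⟩ (by rw [hTgy, hTgx, hyx])
  have hxqA : x * φ (e z z) = x :=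
    pull xC ⟨φ (e z z), hfC z z⟩ xC (by rw [hTgx]; exact hxq)
  have hypA : y * e z z = y :=
    pull yC ⟨e z z, heC z z⟩ yC (by rw [hTgy]; exact hyp)
  -- the conjugating unit
  set u : A := ∑ i, e i z * x * φ (e z i) with hu
  set v : A := ∑ i, φ (e i z) * y * e z i with hv
  have key1 : ∀ i j, (e i z * x * φ (e z i)) * (φ (e j z) * y * e z j)
      = if i = j then e i i else 0 := by
    intro i j
    by_cases h : i = j
    · subst h
      rw [if_pos rfl]
      calc (e i z * x * φ (e z i)) * (φ (e i z) * y * e z i)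
          = e i z * (x * (φ (e z i) * φ (e i z)) * y) * e z i := by noncomm_ring
        _ = e i z * (x * φ (e z z) * y) * e z i := by rw [hmulF, if_pos rfl]
        _ = e i z * (x * y) * e z i := by rw [hxqA]
        _ = e i z * e z z * e z i := by rw [hxyA]
        _ = e i i := by rw [hmulE, if_pos rfl, hmulE, if_pos rfl]
    · rw [if_neg h]
      calc (e i z * x * φ (e z i)) * (φ (e j z) * y * e z j)
          = e i z * (x * (φ (e z i) * φ (e j z)) * y) * e z j := by noncomm_ring
        _ = 0 := by rw [hmulF, if_neg h]; simp
  have key2 : ∀ i j, (φ (e i z) * y * e z i) * (e j z * x * φ (e z j))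
      = if i = j then φ (e i i) else 0 := by
    intro i j
    by_cases h : i = j
    · subst h
      rw [if_pos rfl]
      calc (φ (e i z) * y * e z i) * (e i z * x * φ (e z i))
          = φ (e i z) * (y * (e z i * e i z) * x) * φ (e z i) := by noncomm_ring
        _ = φ (e i z) * (y * e z z * x) * φ (e z i) := by rw [hmulE, if_pos rfl]
        _ = φ (e i z) * (y * x) * φ (e z i) := by rw [hypA]
        _ = φ (e i z) * φ (e z z) * φ (e z i) := by rw [hyxA]
        _ = φ (e i i) := by rw [hmulF, if_pos rfl, hmulF, if_pos rfl]
    · rw [if_neg h]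
      calc (φ (e i z) * y * e z i) * (e j z * x * φ (e z j))
          = φ (e i z) * (y * (e z i * e j z) * x) * φ (e z j) := by noncomm_ring
        _ = 0 := by rw [hmulE, if_neg h]; simp
  have key3 : ∀ k l i j, (φ (e i z) * y * e z i) * e k l * (e j z * x * φ (e z j))
      = if i = k then (if j = l then φ (e k l) else 0) else 0 := by
    intro k l i j
    by_cases h1 : i = k
    · subst h1
      rw [if_pos rfl]
      by_cases h2 : j = l
      · subst h2
        rw [if_pos rfl]
        calc (φ (e i z) * y * e z i) * e i j * (e j z * x * φ (e z j))
            = φ (e i z) * (y * ((e z i * e i j) * e j z) * x) * φ (e z j) := by noncomm_ring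
          _ = φ (e i z) * (y * e z z * x) * φ (e z j) := by
              rw [hmulE, if_pos rfl, hmulE, if_pos rfl]
          _ = φ (e i z) * (y * x) * φ (e z j) := by rw [hypA]
          _ = φ (e i z) * φ (e z z) * φ (e z j) := by rw [hyxA]
          _ = φ (e i j) := by rw [hmulF, if_pos rfl, hmulF, if_pos rfl]
      · rw [if_neg h2]
        calc (φ (e i z) * y * e z i) * e i l * (e j z * x * φ (e z j))
            = φ (e i z) * (y * ((e z i * e i l) * e j z) * x) * φ (e z j) := by noncomm_ring
          _ = 0 := by
              rw [hmulE, if_pos rfl, hmulE, if_neg (fun hh => h2 hh.symm)]; simp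
    · rw [if_neg h1]
      calc (φ (e i z) * y * e z i) * e k l * (e j z * x * φ (e z j))
          = φ (e i z) * (y * ((e z i * e k l) * e j z) * x) * φ (e z j) := by noncomm_ring
        _ = 0 := by rw [hmulE, if_neg h1]; simp
  have huv : u * v = 1 := by
    rw [hu, hv, Finset.sum_mul_sum]
    have hin : ∀ i : Fin n,
        (∑ j, (e i z * x * φ (e z i)) * (φ (e j z) * y * e z j)) = e i i := by
      intro i
      rw [Finset.sum_congr rfl (fun j _ => key1 i j), Finset.sum_ite_eq]
      simp
    rw [Finset.sum_congr rfl (fun i _ => hin i), hsumE]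
  have hvu : v * u = 1 := by
    rw [hu, hv, Finset.sum_mul_sum]
    have hin : ∀ i : Fin n,
        (∑ j, (φ (e i z) * y * e z i) * (e j z * x * φ (e z j))) = φ (e i i) := by
      intro i
      rw [Finset.sum_congr rfl (fun j _ => key2 i j), Finset.sum_ite_eq]
      simp
    rw [Finset.sum_congr rfl (fun i _ => hin i), ← map_sum, hsumE, map_one]
  have hconj : ∀ k l, v * e k l * u = φ (e k l) := by
    intro k l
    have expand : v * e k l * u
        = ∑ i, ∑ j, (φ (e i z) * y * e z i) * e k l * (e j z * x * φ (e z j)) := by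
      rw [hu, hv, Finset.sum_mul, Finset.sum_mul]
      apply Finset.sum_congr rfl
      intro i _
      rw [Finset.mul_sum]
    rw [expand]
    have hin : ∀ i : Fin n,
        (∑ j, (φ (e i z) * y * e z i) * e k l * (e j z * x * φ (e z j)))
          = if i = k then φ (e k l) else 0 := by
      intro i
      rw [Finset.sum_congr rfl (fun j _ => key3 k l i j)]
      by_cases h : i = k
      · subst h
        simp [Finset.sum_ite_eq']
      · simp [h]
    rw [Finset.sum_congr rfl (fun i _ => hin i), Finset.sum_ite_eq']
    simp
  refine ⟨⟨u, v, huv, hvu⟩, ?_⟩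
  intro a ha
  have haB : a ∈ B := hsB (by simp [ha])
  show φ a = v * a * u
  conv_lhs => rw [hdecomp a haB]
  conv_rhs => rw [hdecomp a haB]
  simp only [map_sum, map_smul, Finset.mul_sum, Finset.sum_mul, smul_mul_assoc,
    mul_smul_comm]
  apply Finset.sum_congr rfl
  intro i _
  apply Finset.sum_congr rfl
  intro j _
  rw [← hconj i j]
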